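/- Let G be a Hausdorff locally compact topological group and U a symmetric open neighborhood of the identity whose closure is compact. Then G is U-locally uniform; in fact the multiplication map (x,y) ↦ x·y : U²×U² → G is uniformly continuous with respect to the left uniformity 𝓤_l. -/

import Mathlib

open Filter Set Topology Pointwise

/-- The left uniformity filter of a topological group. -/
def leftUF (G : Type*) [Group G] [TopologicalSpace G] : Filter (G × G) :=
  Filter.comap (fun p : G × G => p.1⁻¹ * p.2) (nhds 1)

/-- The right uniformity filter of a topological group. -/
def rightUF (G : Type*) [Group G] [TopologicalSpace G] : Filter (G × G) :=
  Filter.comap (fun p : G × G => p.1 * p.2⁻¹) (nhds 1)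

/-- The product of a uniformity-like filter on `G × G` with itself, as a filter on
`(G × G) × (G × G)`; this agrees with the product uniformity when the filter is a uniformity. -/
def prodUF {G : Type*} (F : Filter (G × G)) : Filter ((G × G) × (G × G)) :=
  Filter.comap (fun q : (G × G) × (G × G) => (q.1.1, q.2.1)) F ⊓
    Filter.comap (fun q : (G × G) × (G × G) => (q.1.2, q.2.2)) F

/-- Multiplication is uniformly continuous on the set `s ⊆ G × G` with respect to the
uniformity-like filter `F` on `G × G`. -/
def MulUCOn {G : Type*} [Mul G] (F : Filter (G × G)) (s : Set (G × G)) : Prop :=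
  Filter.Tendsto (fun q : (G × G) × (G × G) => (q.1.1 * q.1.2, q.2.1 * q.2.2))
    (prodUF F ⊓ 𝓟 (s ×ˢ s)) F

lemma conj_lemma {G : Type*} [Group G] [TopologicalSpace G] [IsTopologicalGroup G]
    {K : Set G} (hK : IsCompact K) {W : Set G} (hW : W ∈ 𝓝 (1:G)) :
    ∃ V ∈ 𝓝 (1:G), ∀ g ∈ K, ∀ v ∈ V, g⁻¹ * v * g ∈ W := by
  have hcont : Continuous (fun p : G × G => p.1⁻¹ * p.2 * p.1) := by continuity
  have key : ∀ g : G, ∃ O ∈ 𝓝 g, ∃ V ∈ 𝓝 (1:G), ∀ h ∈ O, ∀ v ∈ V, h⁻¹ * v * h ∈ W := by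
    intro g
    have h1 : (fun p : G × G => p.1⁻¹ * p.2 * p.1) ⁻¹' W ∈ 𝓝 ((g, 1) : G × G) := by
      apply hcont.continuousAt.preimage_mem_nhds; simpa using hW
    rw [nhds_prod_eq, mem_prod_iff] at h1
    obtain ⟨O, hO, V, hV, hOV⟩ := h1
    exact ⟨O, hO, V, hV, fun h hh v hv => hOV (mk_mem_prod hh hv)⟩
  choose O hO V hV hprop using key
  obtain ⟨t, ht⟩ := hK.elim_nhds_subcover O (fun g _ => hO g)
  refine ⟨⋂ g ∈ t, V g, (biInter_mem t.finite_toSet).2 fun g _ => hV g, ?_⟩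
  intro g hg v hv
  obtain ⟨g₀, hg₀t, hgO⟩ := mem_iUnion₂.1 (ht.2 hg)
  exact hprop g₀ g hgO v (mem_iInter₂.1 hv g₀ hg₀t)

/-- generic: mul is UC on s ×ˢ s for comap π 𝓝1 style filters -/
lemma main_left {G : Type*} [Group G] [TopologicalSpace G] [IsTopologicalGroup G]
    {K : Set G} (hK : IsCompact K) {A : Set G} (hA : A ⊆ K) :
    MulUCOn (leftUF G) (A ×ˢ A) := by
  rw [MulUCOn, leftUF, tendsto_comap_iff]
  intro W hW
  rw [mem_map]
  obtain ⟨W', hW', hW'mul⟩ := exists_nhds_one_split hW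
  obtain ⟨V₀, hV₀, hconj⟩ := conj_lemma hK hW'
  set V : Set G := V₀ ∩ W' with hVdef
  have hV : V ∈ 𝓝 (1:G) := inter_mem hV₀ hW'
  have hB : (fun p : G × G => p.1⁻¹ * p.2) ⁻¹' V ∈ leftUF G := preimage_mem_comap hV
  have h1 : (fun q : (G × G) × (G × G) => (q.1.1, q.2.1)) ⁻¹'
      ((fun p : G × G => p.1⁻¹ * p.2) ⁻¹' V) ∈ prodUF (leftUF G) :=
    mem_inf_of_left (preimage_mem_comap hB)
  have h2 : (fun q : (G × G) × (G × G) => (q.1.2, q.2.2)) ⁻¹'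
      ((fun p : G × G => p.1⁻¹ * p.2) ⁻¹' V) ∈ prodUF (leftUF G) :=
    mem_inf_of_right (preimage_mem_comap hB)
  refine mem_of_superset (inter_mem_inf (inter_mem h1 h2)
    (mem_principal_self ((A ×ˢ A) ×ˢ (A ×ˢ A)))) ?_
  rintro ⟨⟨a, b⟩, ⟨c, d⟩⟩ ⟨⟨hac, hbd⟩, hs⟩
  have hbA : b ∈ A := hs.1.2
  have hac : a⁻¹ * c ∈ V := hac
  have hbd : b⁻¹ * d ∈ V := hbd
  have key : (a * b)⁻¹ * (c * d) = (b⁻¹ * (a⁻¹ * c) * b) * (b⁻¹ * d) := by group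
  show (a * b)⁻¹ * (c * d) ∈ W
  rw [key]
  exact hW'mul _ (hconj b (hA hbA) _ hac.1) _ hbd.2

lemma main_right {G : Type*} [Group G] [TopologicalSpace G] [IsTopologicalGroup G]
    {K : Set G} (hK : IsCompact K) {A : Set G} (hA : A ⊆ K) :
    MulUCOn (Filter.comap (fun p : G × G => p.2 / p.1) (𝓝 (1:G))) (A ×ˢ A) := by
  set F := Filter.comap (fun p : G × G => p.2 / p.1) (𝓝 (1:G)) with hF
  rw [MulUCOn, hF, tendsto_comap_iff]
  intro W hW
  rw [mem_map]
  obtain ⟨W', hW', hW'mul⟩ := exists_nhds_one_split hW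
  obtain ⟨V₀, hV₀, hconj⟩ := conj_lemma hK.inv hW'
  set V : Set G := V₀ ∩ W' with hVdef
  have hV : V ∈ 𝓝 (1:G) := inter_mem hV₀ hW'
  have hB : (fun p : G × G => p.2 / p.1) ⁻¹' V ∈ F := preimage_mem_comap hV
  have h1 : (fun q : (G × G) × (G × G) => (q.1.1, q.2.1)) ⁻¹'
      ((fun p : G × G => p.2 / p.1) ⁻¹' V) ∈ prodUF F :=
    mem_inf_of_left (preimage_mem_comap hB)
  have h2 : (fun q : (G × G) × (G × G) => (q.1.2, q.2.2)) ⁻¹'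
      ((fun p : G × G => p.2 / p.1) ⁻¹' V) ∈ prodUF F :=
    mem_inf_of_right (preimage_mem_comap hB)
  refine mem_of_superset (inter_mem_inf (inter_mem h1 h2)
    (mem_principal_self ((A ×ˢ A) ×ˢ (A ×ˢ A)))) ?_
  rintro ⟨⟨a, b⟩, ⟨c, d⟩⟩ ⟨⟨hac, hbd⟩, hs⟩
  have hcA : c ∈ A := hs.2.1
  have hac : c / a ∈ V := hac
  have hbd : d / b ∈ V := hbd
  have key : (c * d) / (a * b) = ((c⁻¹)⁻¹ * (d / b) * c⁻¹) * (c / a) := by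
    simp only [div_eq_mul_inv, inv_inv, mul_inv_rev]
    group
  show (c * d) / (a * b) ∈ W
  rw [key]
  exact hW'mul _ (hconj c⁻¹ (inv_mem_inv.2 (hA hcA)) _ hbd.1) _ hac.2

theorem stmt_4 {G : Type*} [Group G] [TopologicalSpace G] [IsTopologicalGroup G] [T2Space G]
    [LocallyCompactSpace G]
    (U : Set G) (hUo : IsOpen U) (hU1 : (1 : G) ∈ U) (hUs : U⁻¹ = U)
    (hUc : IsCompact (closure U)) :
    (∃ u : UniformSpace G, u.toTopologicalSpace = ‹TopologicalSpace G› ∧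
        MulUCOn (@uniformity G u) ((U ^ 2) ×ˢ (U ^ 2))) ∧
      MulUCOn (leftUF G) ((U ^ 2) ×ˢ (U ^ 2)) := by
  have hK : IsCompact (closure U * closure U) := hUc.mul hUc
  have hA : U ^ 2 ⊆ closure U * closure U := by
    rw [pow_two]
    exact mul_subset_mul subset_closure subset_closure
  refine ⟨⟨IsTopologicalGroup.rightUniformSpace G, rfl, ?_⟩, main_left hK hA⟩
  have := main_right hK hA
  simp only [div_eq_mul_inv] at this
  exact this
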